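/- Let F be a nonarchimedean local field whose residue field has characteristic different from 2, ψ an unramified additive character of F, m ≥ 1 an integer, and ω : {1,−1} → ℂ^× a homomorphism. Let W : SL₂(F) → ℂ satisfy: (i) W(n(b)·g) = ψ(b)·W(g) for all b ∈ F; (ii) W(g·n(b)) = ψ(b)·W(g) for all b ∈ 𝔪^{-m}; (iii) W(g·t(a')) = W(g) for all a' ∈ 1 + 𝔪^m; (iv) W((−1)·g) = ω(−1)·W(g) for all g, where −1 denotes the central element −I₂; (v) W(I₂) = 1. Then for every a ∈ F^×: if a = z·a' for some z ∈ {1,−1} and a' ∈ 1 + 𝔪^m then W(t(a)) = ω(z), and otherwise W(t(a)) = 0. (Corollary 3.4 of the paper, stated for any function with the equivariance properties of a Howe-vector Whittaker function.) -/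

import Mathlib

/-!
We model a nonarchimedean local field as a field `F` complete with respect to a
nontrivial discrete valuation `Valued.v : F → ℤₘ₀` (the hypothesis
`Function.Surjective (Valued.v : F → ℤₘ₀)` says the valuation is discrete and
nontrivial, with value group exactly `ℤ`), with finite residue field
(`FiniteResidueField F` below says `𝒪/𝔪` is finite).
For `m : ℤ`, `mpow F m` is the fractional ideal `𝔪^m = {x : v(x) ≥ m}` (written
multiplicatively: `v x ≤ ofAdd (-m)`), and `oneAddMpow F m` is the set `1 + 𝔪^m`.
-/

open scoped Multiplicative
open MatrixGroups MeasureTheory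

noncomputable section

/-- The fractional ideal `𝔪^m = {x ∈ F : v(x) ≥ m}`. -/
def mpow (F : Type*) [Field F] [Valued F (WithZero (Multiplicative ℤ))] (m : ℤ) : Set F :=
  {x : F | Valued.v x ≤ ((Multiplicative.ofAdd (-m) : Multiplicative ℤ) : (WithZero (Multiplicative ℤ)))}

/-- The set `1 + 𝔪^m`. -/
def oneAddMpow (F : Type*) [Field F] [Valued F (WithZero (Multiplicative ℤ))] (m : ℤ) : Set F :=
  {x : F | x - 1 ∈ mpow F m}

/-- An additive character `ψ` of `F` is unramified if it is trivial on the ring of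
integers `𝒪 = 𝔪^0` but nontrivial on `𝔪^{-1}`. -/
def IsUnramified (F : Type*) [Field F] [Valued F (WithZero (Multiplicative ℤ))] (ψ : AddChar F ℂ) : Prop :=
  (∀ x ∈ mpow F 0, ψ x = 1) ∧ ∃ x ∈ mpow F (-1), ψ x ≠ 1

/-- The residue field `𝒪/𝔪` is finite: finitely many elements of `𝒪` cover `𝒪`
modulo `𝔪`. -/
def FiniteResidueField (F : Type*) [Field F] [Valued F (WithZero (Multiplicative ℤ))] : Prop :=
  ∃ S : Finset F, ∀ x ∈ mpow F 0, ∃ y ∈ S, x - y ∈ mpow F 1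

/-- The residue field of `F` has characteristic different from `2`, i.e. `2` is a
unit of the ring of integers, i.e. `2 ∉ 𝔪`. -/
def ResidueCharNeTwo (F : Type*) [Field F] [Valued F (WithZero (Multiplicative ℤ))] : Prop :=
  (2 : F) ∉ mpow F 1

/-- `n(b) = [[1,b],[0,1]] ∈ SL₂(F)`. -/
def nMat (F : Type*) [Field F] (b : F) : SL(2,F) :=
  ⟨!![1, b; 0, 1], by simp [Matrix.det_fin_two_of]⟩

/-- `n̄(x) = [[1,0],[x,1]] ∈ SL₂(F)`. -/
def nbarMat (F : Type*) [Field F] (x : F) : SL(2,F) :=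
  ⟨!![1, 0; x, 1], by simp [Matrix.det_fin_two_of]⟩

/-- `t(a) = [[a,0],[0,a⁻¹]] ∈ SL₂(F)` for `a ∈ F^×`. -/
def tMat (F : Type*) [Field F] (a : Fˣ) : SL(2,F) :=
  ⟨!![(a : F), 0; 0, ((a⁻¹ : Fˣ) : F)], by simp [Matrix.det_fin_two_of]⟩

/-- `w = [[0,1],[-1,0]] ∈ SL₂(F)`. -/
def wMat (F : Type*) [Field F] : SL(2,F) :=
  ⟨!![0, 1; -1, 0], by simp [Matrix.det_fin_two_of]⟩

-- ### Auxiliary lemmas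

lemma aux_not_le {u : (WithZero (Multiplicative ℤ))} {n : ℤ} (h : ¬ u ≤ ((Multiplicative.ofAdd n : Multiplicative ℤ) : (WithZero (Multiplicative ℤ)))) :
    u ≠ 0 ∧ ((Multiplicative.ofAdd (n+1) : Multiplicative ℤ) : (WithZero (Multiplicative ℤ))) ≤ u := by
  rcases eq_or_ne u 0 with rfl | hu
  · exact absurd zero_le' h
  · obtain ⟨k, rfl⟩ : ∃ k : Multiplicative ℤ, (k : (WithZero (Multiplicative ℤ))) = u := ⟨WithZero.unzero hu, WithZero.coe_unzero hu⟩
    refine ⟨hu, ?_⟩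
    rw [WithZero.coe_le_coe] at h ⊢
    rw [not_le] at h
    exact h

lemma aux_tn (F : Type*) [Field F] (a : Fˣ) (b : F) :
    tMat F a * nMat F b = nMat F ((a:F)^2 * b) * tMat F a := by
  ext i j
  rw [Matrix.SpecialLinearGroup.coe_mul, Matrix.SpecialLinearGroup.coe_mul]
  fin_cases i <;> fin_cases j <;>
    simp [tMat, nMat, Matrix.mul_apply, Fin.sum_univ_two, sq, mul_assoc]
  all_goals field_simp

lemma aux_tt (F : Type*) [Field F] (u : Fˣ) :
    tMat F (-1) * tMat F u = tMat F (-u) := by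
  ext i j
  rw [Matrix.SpecialLinearGroup.coe_mul]
  fin_cases i <;> fin_cases j <;>
    simp [tMat, Matrix.mul_apply, Fin.sum_univ_two]

lemma aux_mpow_neg {F : Type*} [Field F] [Valued F (WithZero (Multiplicative ℤ))] {m : ℤ} {x : F}
    (h : x ∈ mpow F m) : -x ∈ mpow F m := by
  simpa [mpow] using h

/-- Corollary 3.4. Suppose the residue characteristic of `F` is not
`2`, `ψ` is unramified, `m ≥ 1`, and `ω : {1,-1} → ℂ^×` is a homomorphism (encoded by
the value `ωneg = ω(-1) ∈ ℂ` with `ωneg² = 1 = ω(1)`). Let `W : SL₂(F) → ℂ` satisfy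
the equivariance properties (i)–(v) of a Howe-vector Whittaker function.  Then for
`a ∈ F^×`: if `a = z·a'` with `z ∈ {1,-1}` and `a' ∈ 1 + 𝔪^m` then `W(t(a)) = ω(z)`,
and otherwise `W(t(a)) = 0`. -/
theorem howe_vector_value_on_torus
    (F : Type*) [Field F] [Valued F (WithZero (Multiplicative ℤ))] [CompleteSpace F]
    (hdisc : Function.Surjective (Valued.v : F → (WithZero (Multiplicative ℤ))))
    (hfin : FiniteResidueField F) (hchar : ResidueCharNeTwo F)
    (ψ : AddChar F ℂ) (hψcont : Continuous ψ) (hψ : IsUnramified F ψ)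
    (m : ℤ) (hm : 1 ≤ m)
    (ωneg : ℂ) (hω : ωneg ^ 2 = 1)
    (W : SL(2,F) → ℂ)
    (hW1 : ∀ (b : F) (g : SL(2,F)), W (nMat F b * g) = ψ b * W g)
    (hW2 : ∀ b ∈ mpow F (-m), ∀ g : SL(2,F), W (g * nMat F b) = ψ b * W g)
    (hW3 : ∀ a' : Fˣ, (a' : F) ∈ oneAddMpow F m → ∀ g : SL(2,F), W (g * tMat F a') = W g)
    (hW4 : ∀ g : SL(2,F), W (tMat F (-1) * g) = ωneg * W g)
    (hW5 : W 1 = 1) :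
    ∀ a : Fˣ,
      (∀ a' ∈ oneAddMpow F m, (a : F) = a' → W (tMat F a) = 1) ∧
      (∀ a' ∈ oneAddMpow F m, (a : F) = -a' → W (tMat F a) = ωneg) ∧
      ((∀ a' ∈ oneAddMpow F m, (a : F) ≠ a' ∧ (a : F) ≠ -a') → W (tMat F a) = 0) := by
  intro a
  have key1 : ∀ u : Fˣ, (u : F) ∈ oneAddMpow F m → W (tMat F u) = 1 := by
    intro u hu
    have := hW3 u hu 1
    rwa [one_mul, hW5] at this
  refine ⟨?_, ?_, ?_⟩
  · intro a' ha' h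
    exact key1 a (h ▸ ha')
  · intro a' ha' h
    have hu : ((-a : Fˣ) : F) ∈ oneAddMpow F m := by
      have e : ((-a : Fˣ) : F) = a' := by push_cast; rw [h]; ring
      rw [e]; exact ha'
    have h1 : W (tMat F (-1) * tMat F (-a)) = ωneg * W (tMat F (-a)) := hW4 _
    rw [aux_tt, neg_neg, key1 (-a) hu, mul_one] at h1
    exact h1
  · intro hne
    by_contra hW0
    -- Step 1: a² - 1 ∈ 𝔪^m
    have hsq : (a : F)^2 - 1 ∈ mpow F m := by
      by_contra hout
      obtain ⟨hne0, hge⟩ := aux_not_le hout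
      have hpsi : ∀ b ∈ mpow F (-m), ψ (((a:F)^2 - 1) * b) = 1 := by
        intro b hb
        have e1 := hW2 b hb (tMat F a)
        rw [aux_tn, hW1] at e1
        have e2 : ψ ((a:F)^2 * b) = ψ b := mul_right_cancel₀ hW0 e1
        have e3 : (a:F)^2 * b = ((a:F)^2 - 1) * b + b := by ring
        rw [e3, AddChar.map_add_eq_mul] at e2
        have hb0 : ψ b ≠ 0 := by
          have : ψ b * ψ (-b) = 1 := by
            rw [← AddChar.map_add_eq_mul, add_neg_cancel, AddChar.map_zero_eq_one]
          exact left_ne_zero_of_mul_eq_one this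
        exact mul_right_cancel₀ hb0 (by rw [e2, one_mul])
      obtain ⟨x, hx, hx1⟩ := hψ.2
      apply hx1
      set c := (a:F)^2 - 1 with hc
      have hc0 : c ≠ 0 := by
        intro h0
        exact hne0 (by rw [h0, Valuation.map_zero])
      have hx0 : x ≠ 0 := by
        intro h0
        exact hx1 (by rw [h0, AddChar.map_zero_eq_one])
      have hvc0 : Valued.v c ≠ 0 := (Valuation.ne_zero_iff _).mpr hc0
      have hvx0 : Valued.v x ≠ 0 := (Valuation.ne_zero_iff _).mpr hx0
      obtain ⟨k, hk⟩ : ∃ k : Multiplicative ℤ, (k : (WithZero (Multiplicative ℤ))) = Valued.v c :=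
        ⟨WithZero.unzero hvc0, WithZero.coe_unzero hvc0⟩
      obtain ⟨j, hj⟩ : ∃ j : Multiplicative ℤ, (j : (WithZero (Multiplicative ℤ))) = Valued.v x :=
        ⟨WithZero.unzero hvx0, WithZero.coe_unzero hvx0⟩
      have hb : x * c⁻¹ ∈ mpow F (-m) := by
        rw [mpow, Set.mem_setOf_eq, Valuation.map_mul, map_inv₀, ← hk, ← hj,
          ← WithZero.coe_inv, ← WithZero.coe_mul, WithZero.coe_le_coe, neg_neg]
        have h1 : Multiplicative.ofAdd (-m+1) ≤ k := by
          rw [← WithZero.coe_le_coe, hk]; exact hge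
        have h2 : j ≤ Multiplicative.ofAdd (1:ℤ) := by
          rw [← WithZero.coe_le_coe, hj]
          simpa [mpow] using hx
        have h1' : (-m+1 : ℤ) ≤ Multiplicative.toAdd k := h1
        have h2' : Multiplicative.toAdd j ≤ (1:ℤ) := h2
        show j * k⁻¹ ≤ Multiplicative.ofAdd m
        have : Multiplicative.toAdd (j * k⁻¹) ≤ m := by
          rw [toAdd_mul, toAdd_inv]; omega
        exact this
      have := hpsi _ hb
      rwa [mul_comm x, ← mul_assoc, mul_inv_cancel₀ hc0, one_mul] at this
    -- Step 2: v(2) = 1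
    have h2ne : (2:F) ≠ 0 := by
      intro h0
      exact hchar (by rw [mpow, Set.mem_setOf_eq, h0, Valuation.map_zero]; exact zero_le')
    have hv2 : Valued.v (2:F) = 1 := by
      obtain ⟨h2a, h2b⟩ := aux_not_le hchar
      have hle : Valued.v (2:F) ≤ 1 := by
        have : (2:F) = 1 + 1 := by norm_num
        rw [this]
        calc Valued.v ((1:F) + 1) ≤ max (Valued.v (1:F)) (Valued.v (1:F)) := Valuation.map_add _ _ _
          _ = 1 := by rw [Valuation.map_one, max_self]
      refine le_antisymm hle ?_
      have : ((Multiplicative.ofAdd (-1+1 : ℤ) : Multiplicative ℤ) : (WithZero (Multiplicative ℤ))) = 1 := by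
        norm_num
      rw [← this]; exact h2b
    -- Step 3: a - 1 ∈ 𝔪^m or a + 1 ∈ 𝔪^m
    have hfact : Valued.v ((a:F) - 1) * Valued.v ((a:F) + 1) = Valued.v ((a:F)^2 - 1) := by
      rw [← Valuation.map_mul]; congr 1; ring
    have hsqle : Valued.v ((a:F)^2 - 1) ≤ ((Multiplicative.ofAdd (-m) : Multiplicative ℤ) : (WithZero (Multiplicative ℤ))) := hsq
    have hcases : (a:F) - 1 ∈ mpow F m ∨ (a:F) + 1 ∈ mpow F m := by
      by_cases hcase : Valued.v ((a:F) - 1) ≤ ((Multiplicative.ofAdd (-1 : ℤ) : Multiplicative ℤ) : (WithZero (Multiplicative ℤ)))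
      · left
        have hlt : Valued.v ((a:F) - 1) < Valued.v (2:F) := by
          rw [hv2]
          refine lt_of_le_of_lt hcase ?_
          rw [← WithZero.coe_one, WithZero.coe_lt_coe]
          rw [← ofAdd_zero]
          exact Multiplicative.ofAdd_lt.2 (by norm_num)
        have hsum : Valued.v ((a:F) + 1) = 1 := by
          have e : (a:F) + 1 = ((a:F) - 1) + 2 := by ring
          rw [e, Valuation.map_add_eq_of_lt_right _ hlt, hv2]
        rw [mpow, Set.mem_setOf_eq]
        calc Valued.v ((a:F) - 1) = Valued.v ((a:F) - 1) * Valued.v ((a:F) + 1) := by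
              rw [hsum, mul_one]
          _ = Valued.v ((a:F)^2 - 1) := hfact
          _ ≤ _ := hsqle
      · right
        obtain ⟨hne0, hge⟩ := aux_not_le hcase
        have h1le : (1 : (WithZero (Multiplicative ℤ))) ≤ Valued.v ((a:F) - 1) := by
          have : ((Multiplicative.ofAdd (-1+1 : ℤ) : Multiplicative ℤ) : (WithZero (Multiplicative ℤ))) = 1 := by norm_num
          rw [← this]; exact hge
        rw [mpow, Set.mem_setOf_eq]
        calc Valued.v ((a:F) + 1) = 1 * Valued.v ((a:F) + 1) := (one_mul _).symm
          _ ≤ Valued.v ((a:F) - 1) * Valued.v ((a:F) + 1) := mul_le_mul_left h1le _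
          _ = Valued.v ((a:F)^2 - 1) := hfact
          _ ≤ _ := hsqle
    rcases hcases with h | h
    · exact (hne (a:F) h).1 rfl
    · have hmem : (-(a:F)) ∈ oneAddMpow F m := by
        rw [oneAddMpow, Set.mem_setOf_eq]
        have : (-(a:F)) - 1 = -((a:F) + 1) := by ring
        rw [this]
        exact aux_mpow_neg h
      exact (hne (-(a:F)) hmem).2 (neg_neg (a:F)).symm
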